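/- arXiv:2310.15375 — 2 statements merged into one kernel-verified Lean document; each statement's English description precedes it below -/
import Mathlib

section
/- Let n ≥ 1 and M ∈ ℂ^{n×n}. Define the circulant matrix C_M ∈ ℂ^{n×n} by (C_M)_{ij} = c_{(i−j) mod n}, where c_k = (1/n) Σ_{(i,j) : (i−j) mod n = k} M_{ij} is the mean of the entries of M on the k-th circulant diagonal. Then for every circulant matrix C ∈ ℂ^{n×n}, ‖C_M − M‖_F ≤ ‖C − M‖_F; that is, C_M is the Frobenius-optimal circulant approximation of M. -/
open Finset Matrix

/-- Frobenius norm of a complex matrix. -/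
noncomputable def frobNorm {n : ℕ} (A : Matrix (Fin n) (Fin n) ℂ) : ℝ :=
  Real.sqrt (∑ i, ∑ j, ‖A i j‖ ^ 2)

lemma mean_min {α : Type*} (s : Finset α) (g : α → ℂ) (μ z : ℂ)
    (h : ∑ a ∈ s, (μ - g a) = 0) :
    ∑ a ∈ s, ‖μ - g a‖ ^ 2 ≤ ∑ a ∈ s, ‖z - g a‖ ^ 2 := by
  have nsq : ∀ w : ℂ, ‖w‖ ^ 2 = Complex.normSq w := by
    intro w; rw [Complex.normSq_eq_norm_sq]
  have expand : ∀ a ∈ s, ‖z - g a‖ ^ 2 =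
      Complex.normSq (z - μ) + ‖μ - g a‖ ^ 2 +
        2 * ((z - μ) * (starRingEnd ℂ) (μ - g a)).re := by
    intro a _
    have hz : z - g a = (z - μ) + (μ - g a) := by ring
    rw [nsq, nsq, hz, Complex.normSq_add]
  rw [Finset.sum_congr rfl expand]
  rw [Finset.sum_add_distrib, Finset.sum_add_distrib]
  have cross : ∑ a ∈ s, 2 * ((z - μ) * (starRingEnd ℂ) (μ - g a)).re = 0 := by
    rw [← Finset.mul_sum, ← Complex.re_sum, ← Finset.mul_sum, ← map_sum, h]
    simp
  rw [cross, add_zero]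
  have : 0 ≤ ∑ _a ∈ s, Complex.normSq (z - μ) :=
    Finset.sum_nonneg fun _ _ => Complex.normSq_nonneg _
  linarith

theorem circulant_means_optimal (n : ℕ) (hn : 1 ≤ n)
    (M : Matrix (Fin n) (Fin n) ℂ)
    (c : Fin n → ℂ)
    (hc : ∀ k : Fin n, c k =
      (1 / (n : ℂ)) *
        ∑ p ∈ Finset.univ.filter (fun p : Fin n × Fin n => p.1 - p.2 = k), M p.1 p.2)
    (CM : Matrix (Fin n) (Fin n) ℂ) (hCM : ∀ i j, CM i j = c (i - j))
    (C : Matrix (Fin n) (Fin n) ℂ)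
    (hC : ∀ i j i' j' : Fin n, i - j = i' - j' → C i j = C i' j') :
    frobNorm (CM - M) ≤ frobNorm (C - M) := by
  haveI : NeZero n := ⟨by omega⟩
  apply Real.sqrt_le_sqrt
  have hns : (n : ℂ) ≠ 0 := Nat.cast_ne_zero.mpr (by omega)
  have fiber_card : ∀ k : Fin n,
      (Finset.univ.filter (fun p : Fin n × Fin n => p.1 - p.2 = k)).card = n := by
    intro k
    have hb : (Finset.univ.filter (fun p : Fin n × Fin n => p.1 - p.2 = k)).card
        = (Finset.univ : Finset (Fin n)).card := by
      apply Finset.card_bij' (fun p _ => p.2) (fun j _ => (k + j, j))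
      · intro p hp; simp
      · intro j _; simp [Finset.mem_filter]
      · intro p hp
        simp only [Finset.mem_filter, Finset.mem_univ, true_and] at hp
        ext
        · simp [← hp]
        · rfl
      · intro j _; rfl
    simpa using hb
  have key : ∀ k : Fin n,
      ∑ p ∈ Finset.univ.filter (fun p : Fin n × Fin n => p.1 - p.2 = k),
        ‖(CM - M) p.1 p.2‖ ^ 2 ≤
      ∑ p ∈ Finset.univ.filter (fun p : Fin n × Fin n => p.1 - p.2 = k),
        ‖(C - M) p.1 p.2‖ ^ 2 := by
    intro k
    have h1 : ∀ p ∈ Finset.univ.filter (fun p : Fin n × Fin n => p.1 - p.2 = k),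
        ‖(CM - M) p.1 p.2‖ ^ 2 = ‖c k - M p.1 p.2‖ ^ 2 := by
      intro p hp
      simp only [Finset.mem_filter, Finset.mem_univ, true_and] at hp
      simp [Matrix.sub_apply, hCM, hp]
    have h2 : ∀ p ∈ Finset.univ.filter (fun p : Fin n × Fin n => p.1 - p.2 = k),
        ‖(C - M) p.1 p.2‖ ^ 2 = ‖C k 0 - M p.1 p.2‖ ^ 2 := by
      intro p hp
      simp only [Finset.mem_filter, Finset.mem_univ, true_and] at hp
      have : C p.1 p.2 = C k 0 := hC _ _ _ _ (by rw [hp]; simp)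
      simp [Matrix.sub_apply, this]
    rw [Finset.sum_congr rfl h1, Finset.sum_congr rfl h2]
    apply mean_min
    rw [Finset.sum_sub_distrib, Finset.sum_const, fiber_card k, hc k]
    field_simp
    rw [nsmul_eq_mul, mul_div_cancel₀ _ hns, sub_self]
  calc ∑ i, ∑ j, ‖(CM - M) i j‖ ^ 2
      = ∑ k : Fin n, ∑ p ∈ Finset.univ.filter (fun p : Fin n × Fin n => p.1 - p.2 = k),
          ‖(CM - M) p.1 p.2‖ ^ 2 := by
        rw [Finset.sum_fiberwise]
        exact (Fintype.sum_prod_type' (fun i j => ‖(CM - M) i j‖ ^ 2)).symm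
    _ ≤ ∑ k : Fin n, ∑ p ∈ Finset.univ.filter (fun p : Fin n × Fin n => p.1 - p.2 = k),
          ‖(C - M) p.1 p.2‖ ^ 2 := Finset.sum_le_sum fun k _ => key k
    _ = ∑ i, ∑ j, ‖(C - M) i j‖ ^ 2 := by
        rw [Finset.sum_fiberwise]
        exact Fintype.sum_prod_type' (fun i j => ‖(C - M) i j‖ ^ 2)
end

section
/- Let n ≥ 1, let ω = exp(2πi/n), and let F ∈ ℂ^{n×n} be the unitary DFT matrix with entries F_{jk} = ω^{jk}/√n. For M ∈ ℂ^{n×n}, let D be the diagonal matrix whose diagonal equals the diagonal of F M Fᴴ, and set C_D = Fᴴ D F. Then C_D is circulant, its eigenvalues are exactly the diagonal entries of F M Fᴴ (each diagonal entry d_{jj} satisfies C_D x_j = d_{jj} x_j where x_j is the j-th column of Fᴴ), and for every circulant matrix C ∈ ℂ^{n×n}, ‖C_D − M‖_F ≤ ‖C − M‖_F. -/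
open Finset Matrix Complex

lemma pow_mod_eq {n : ℕ} {ω : ℂ} (hωn : ω ^ n = 1) (t : ℕ) : ω ^ (t % n) = ω ^ t := by
  conv_rhs => rw [← Nat.div_add_mod t n]
  rw [pow_add, pow_mul, hωn, one_pow, one_mul]

lemma pow_mul_val_add {n : ℕ} {ω : ℂ} (hωn : ω ^ n = 1) (a : ℕ) (x y : Fin n) :
    ω ^ (a * ((x + y : Fin n) : ℕ)) = ω ^ (a * (x : ℕ)) * ω ^ (a * (y : ℕ)) := by
  have h1 : (ω ^ a) ^ n = 1 := by rw [← pow_mul, mul_comm, pow_mul, hωn, one_pow]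
  rw [pow_mul, Fin.val_add, pow_mod_eq h1, pow_add, ← pow_mul, ← pow_mul]

lemma conj_omega {n : ℕ} {ω : ℂ} (hn : n ≠ 0) (hωn : ω ^ n = 1) :
    (starRingEnd ℂ) ω = ω⁻¹ := by
  have h1 : ‖ω‖ ^ n = 1 := by rw [← norm_pow, hωn, norm_one]
  have h2 : ‖ω‖ = 1 := by
    have := (pow_left_inj₀ (norm_nonneg ω) zero_le_one hn).mp (by rw [h1, one_pow])
    exact this
  exact (Complex.inv_eq_conj h2).symm

lemma orth {n : ℕ} {ω : ℂ} (hprim : IsPrimitiveRoot ω n) (hn : n ≠ 0) (a b : Fin n) :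
    ∑ k : Fin n, ω ^ ((k : ℕ) * (a : ℕ)) * (starRingEnd ℂ) (ω ^ ((k : ℕ) * (b : ℕ))) =
      if a = b then (n : ℂ) else 0 := by
  have hωn := hprim.pow_eq_one
  have hω0 : ω ≠ 0 := by
    intro h; rw [h, zero_pow hn] at hωn; exact zero_ne_one hωn
  have hconj : (starRingEnd ℂ) ω = ω⁻¹ := conj_omega hn hωn
  set ζ : ℂ := ω ^ (a : ℕ) * (ω ^ (b : ℕ))⁻¹ with hζdef
  have hterm : ∀ k : Fin n,
      ω ^ ((k : ℕ) * (a : ℕ)) * (starRingEnd ℂ) (ω ^ ((k : ℕ) * (b : ℕ))) = ζ ^ (k : ℕ) := by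
    intro k
    rw [map_pow, hconj, hζdef, mul_pow, ← inv_pow, mul_comm (k : ℕ) (a : ℕ),
      mul_comm (k : ℕ) (b : ℕ), pow_mul, pow_mul, inv_pow]
  rw [Finset.sum_congr rfl (fun k _ => hterm k)]
  by_cases hab : a = b
  · subst hab
    simp [hζdef, mul_inv_cancel₀ (pow_ne_zero _ hω0)]
  · rw [if_neg hab]
    have hζ1 : ζ ≠ 1 := by
      intro h
      apply hab
      have : ω ^ (a : ℕ) = ω ^ (b : ℕ) := by
        rw [hζdef, mul_inv_eq_one₀ (pow_ne_zero _ hω0)] at h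
        exact h
      exact Fin.ext (hprim.pow_inj a.isLt b.isLt this)
    have hζn : ζ ^ n = 1 := by
      rw [hζdef, mul_pow, ← pow_mul, mul_comm (a:ℕ) n, pow_mul, hωn, one_pow,
        inv_pow, ← pow_mul, mul_comm (b:ℕ) n, pow_mul, hωn, one_pow, inv_one, mul_one]
    rw [Fin.sum_univ_eq_sum_range, geom_sum_eq hζ1, hζn, sub_self, zero_div]

noncomputable def frobSq {n : ℕ} (A : Matrix (Fin n) (Fin n) ℂ) : ℝ :=
  ∑ i, ∑ j, ‖A i j‖ ^ 2

lemma frobSq_eq_trace {n : ℕ} (A : Matrix (Fin n) (Fin n) ℂ) :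
    (frobSq A : ℂ) = Matrix.trace (Aᴴ * A) := by
  rw [Matrix.trace, frobSq]
  push_cast
  rw [Finset.sum_comm]
  refine Finset.sum_congr rfl fun j _ => ?_
  rw [Matrix.diag, Matrix.mul_apply]
  refine Finset.sum_congr rfl fun i _ => ?_
  rw [Matrix.conjTranspose_apply, mul_comm]
  simp [Complex.mul_conj, Complex.normSq_eq_norm_sq]

lemma frobSq_conj {n : ℕ} (A U : Matrix (Fin n) (Fin n) ℂ)
    (h1 : Uᴴ * U = 1) (h2 : U * Uᴴ = 1) :
    frobSq (U * A * Uᴴ) = frobSq A := by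
  have : ((frobSq (U * A * Uᴴ) : ℂ)) = (frobSq A : ℂ) := by
    rw [frobSq_eq_trace, frobSq_eq_trace]
    rw [Matrix.conjTranspose_mul, Matrix.conjTranspose_mul, Matrix.conjTranspose_conjTranspose]
    have h1' : ∀ X : Matrix (Fin n) (Fin n) ℂ, Uᴴ * (U * X) = X := fun X => by
      rw [← Matrix.mul_assoc, h1, Matrix.one_mul]
    simp only [Matrix.mul_assoc, h1']
    rw [Matrix.trace_mul_comm]
    simp only [Matrix.mul_assoc, h1, Matrix.mul_one]
  exact_mod_cast this

theorem optcirc_properties (n : ℕ) (hn : 1 ≤ n)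
    (ω : ℂ) (hω : ω = Complex.exp (2 * Real.pi * Complex.I / n))
    (F : Matrix (Fin n) (Fin n) ℂ)
    (hF : ∀ j k : Fin n, F j k = ω ^ ((j : ℕ) * (k : ℕ)) / (Real.sqrt n : ℂ))
    (M : Matrix (Fin n) (Fin n) ℂ)
    (D : Matrix (Fin n) (Fin n) ℂ)
    (hD : D = Matrix.diagonal (fun j => (F * M * Fᴴ) j j))
    (CD : Matrix (Fin n) (Fin n) ℂ) (hCD : CD = Fᴴ * D * F) :
    (∀ i j i' j' : Fin n, i - j = i' - j' → CD i j = CD i' j') ∧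
    (∀ j : Fin n, CD.mulVec (fun l => Fᴴ l j) =
      ((F * M * Fᴴ) j j) • (fun l => Fᴴ l j)) ∧
    (∀ C : Matrix (Fin n) (Fin n) ℂ,
      (∀ i j i' j' : Fin n, i - j = i' - j' → C i j = C i' j') →
        frobNorm (CD - M) ≤ frobNorm (C - M)) := by
  have hn0 : n ≠ 0 := Nat.one_le_iff_ne_zero.mp hn
  haveI : NeZero n := ⟨hn0⟩
  have hprim : IsPrimitiveRoot ω n := hω ▸ Complex.isPrimitiveRoot_exp n hn0
  have hωn : ω ^ n = 1 := hprim.pow_eq_one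
  have hω0 : ω ≠ 0 := by
    intro h; rw [h, zero_pow hn0] at hωn; exact zero_ne_one hωn
  have hconjp : ∀ m : ℕ, (starRingEnd ℂ) (ω ^ m) = (ω ^ m)⁻¹ := fun m => by
    rw [map_pow, conj_omega hn0 hωn, inv_pow]
  have hnC : (n : ℂ) ≠ 0 := Nat.cast_ne_zero.mpr hn0
  have hss : (Real.sqrt n : ℂ) * (Real.sqrt n : ℂ) = (n : ℂ) := by
    rw [← Complex.ofReal_mul, Real.mul_self_sqrt (Nat.cast_nonneg n)]
    norm_cast
  have hs0 : (Real.sqrt n : ℂ) ≠ 0 := by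
    intro h; rw [h, mul_zero] at hss; exact hnC hss.symm
  -- unitarity
  have hFHF : Fᴴ * F = 1 := by
    ext i j
    rw [Matrix.mul_apply, Matrix.one_apply]
    have hterm : ∀ k : Fin n, Fᴴ i k * F k j =
        ω ^ ((k : ℕ) * (j : ℕ)) * (starRingEnd ℂ) (ω ^ ((k : ℕ) * (i : ℕ))) / (n : ℂ) := by
      intro k
      rw [Matrix.conjTranspose_apply, hF, hF, RCLike.star_def, map_div₀, Complex.conj_ofReal, ← hss]
      field_simp
    rw [Finset.sum_congr rfl fun k _ => hterm k, ← Finset.sum_div, orth hprim hn0 j i]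
    by_cases h : i = j
    · subst h; rw [if_pos rfl, if_pos rfl, div_self hnC]
    · rw [if_neg h, if_neg (Ne.symm h), zero_div]
  have hFFH : F * Fᴴ = 1 := by
    ext i j
    rw [Matrix.mul_apply, Matrix.one_apply]
    have hterm : ∀ k : Fin n, F i k * Fᴴ k j =
        ω ^ ((k : ℕ) * (i : ℕ)) * (starRingEnd ℂ) (ω ^ ((k : ℕ) * (j : ℕ))) / (n : ℂ) := by
      intro k
      rw [Matrix.conjTranspose_apply, hF, hF, RCLike.star_def, map_div₀, Complex.conj_ofReal, ← hss,
        mul_comm (i : ℕ) (k : ℕ), mul_comm (j : ℕ) (k : ℕ)]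
      field_simp
    rw [Finset.sum_congr rfl fun k _ => hterm k, ← Finset.sum_div, orth hprim hn0 i j]
    by_cases h : i = j
    · subst h; rw [if_pos rfl, if_pos rfl, div_self hnC]
    · rw [if_neg h, if_neg h, zero_div]
  set d : Fin n → ℂ := fun j => (F * M * Fᴴ) j j with hd
  -- entry formula for CD
  have hCDentry : ∀ i j : Fin n,
      CD i j = (∑ k : Fin n, d k * ω ^ ((k : ℕ) * ((j - i : Fin n) : ℕ))) / (n : ℂ) := by
    intro i j
    rw [hCD, hD, Matrix.mul_apply]
    have hterm : ∀ k : Fin n, (Fᴴ * Matrix.diagonal d) i k * F k j =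
        d k * ω ^ ((k : ℕ) * ((j - i : Fin n) : ℕ)) / (n : ℂ) := by
      intro k
      rw [Matrix.mul_diagonal, Matrix.conjTranspose_apply, hF, hF, RCLike.star_def]
      have hj : ω ^ ((k : ℕ) * (j : ℕ)) =
          ω ^ ((k : ℕ) * ((j - i : Fin n) : ℕ)) * ω ^ ((k : ℕ) * (i : ℕ)) := by
        conv_lhs => rw [show j = (j - i) + i from (sub_add_cancel j i).symm]
        exact pow_mul_val_add hωn _ _ _
      rw [map_div₀, Complex.conj_ofReal, hconjp, hj, ← hss]
      field_simp
    rw [Finset.sum_congr rfl fun k _ => hterm k, ← Finset.sum_div]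
  refine ⟨?_, ?_, ?_⟩
  · -- circulant
    intro i j i' j' h
    have h2 : j - i = j' - i' := by
      rw [← neg_sub i j, ← neg_sub i' j', h]
    rw [hCDentry, hCDentry, h2]
  · -- eigenvectors
    intro j
    have hCDF : CD * Fᴴ = Fᴴ * D := by
      rw [hCD, Matrix.mul_assoc (Fᴴ * D) F Fᴴ, hFFH, Matrix.mul_one]
    funext l
    have : CD.mulVec (fun l => Fᴴ l j) l = (CD * Fᴴ) l j := by
      rw [Matrix.mul_apply, Matrix.mulVec, dotProduct]
    rw [this, hCDF, hD, Matrix.mul_diagonal]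
    simp only [Pi.smul_apply, smul_eq_mul]
    ring
  · -- optimality
    intro C hC
    set c : Fin n → ℂ := fun m => C m 0 with hc
    have hdiag : ∀ a b : Fin n, a ≠ b → (F * C * Fᴴ) a b = 0 := by
      intro a b hab
      have key : ∑ k : Fin n, ∑ j : Fin n,
          ω ^ ((a : ℕ) * (j : ℕ)) * (starRingEnd ℂ) (ω ^ ((b : ℕ) * (k : ℕ))) * c (j - k) = 0 := by
        have hre : ∀ k : Fin n, ∑ j : Fin n,
            ω ^ ((a : ℕ) * (j : ℕ)) * (starRingEnd ℂ) (ω ^ ((b : ℕ) * (k : ℕ))) * c (j - k)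
            = (ω ^ ((a : ℕ) * (k : ℕ)) * (starRingEnd ℂ) (ω ^ ((b : ℕ) * (k : ℕ)))) *
              ∑ m : Fin n, ω ^ ((a : ℕ) * (m : ℕ)) * c m := by
          intro k
          rw [Finset.mul_sum,
            ← Equiv.sum_comp (Equiv.addRight k)
              (fun j => ω ^ ((a : ℕ) * (j : ℕ)) * (starRingEnd ℂ) (ω ^ ((b : ℕ) * (k : ℕ))) * c (j - k))]
          refine Finset.sum_congr rfl fun m _ => ?_
          simp only [Equiv.coe_addRight]
          rw [add_sub_cancel_right, pow_mul_val_add hωn]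
          ring
        rw [Finset.sum_congr rfl fun k _ => hre k, ← Finset.sum_mul]
        have h0 : ∑ k : Fin n,
            ω ^ ((a : ℕ) * (k : ℕ)) * (starRingEnd ℂ) (ω ^ ((b : ℕ) * (k : ℕ))) = 0 := by
          have ho := orth hprim hn0 a b
          rw [if_neg hab] at ho
          rw [← ho]
          exact Finset.sum_congr rfl fun k _ => by rw [mul_comm (a : ℕ) (k : ℕ), mul_comm (b : ℕ) (k : ℕ)]
        rw [h0, zero_mul]
      rw [Matrix.mul_apply]
      have hterm : ∀ k : Fin n, (F * C) a k * Fᴴ k b =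
          (∑ j : Fin n, ω ^ ((a : ℕ) * (j : ℕ)) * (starRingEnd ℂ) (ω ^ ((b : ℕ) * (k : ℕ))) * c (j - k)) / (n : ℂ) := by
        intro k
        have hCjk : ∀ j : Fin n, C j k = c (j - k) := fun j => hC j k (j - k) 0 (by rw [sub_zero])
        rw [Matrix.mul_apply, Matrix.conjTranspose_apply, RCLike.star_def, hF, Finset.sum_mul, Finset.sum_div]
        refine Finset.sum_congr rfl fun j _ => ?_
        rw [hF, hCjk j, map_div₀, Complex.conj_ofReal, ← hss]
        field_simp
      rw [Finset.sum_congr rfl fun k _ => hterm k, ← Finset.sum_div, key, zero_div]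
    -- conjugation identities
    have e1 : F * (Fᴴ * D * F) = D * F := by
      rw [← Matrix.mul_assoc, ← Matrix.mul_assoc, hFFH, Matrix.one_mul]
    have hCD' : F * (CD - M) * Fᴴ = D - F * M * Fᴴ := by
      rw [hCD, Matrix.mul_sub, Matrix.sub_mul, e1, Matrix.mul_assoc D F Fᴴ, hFFH, Matrix.mul_one]
    have h1 : frobSq (CD - M) = frobSq (D - F * M * Fᴴ) := by
      rw [← frobSq_conj (CD - M) F hFHF hFFH, hCD']
    have h2 : frobSq (C - M) = frobSq (F * C * Fᴴ - F * M * Fᴴ) := by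
      rw [← frobSq_conj (C - M) F hFHF hFFH, Matrix.mul_sub, Matrix.sub_mul]
    have hle : frobSq (D - F * M * Fᴴ) ≤ frobSq (F * C * Fᴴ - F * M * Fᴴ) := by
      unfold frobSq
      refine Finset.sum_le_sum fun i _ => Finset.sum_le_sum fun j _ => ?_
      by_cases hij : i = j
      · subst hij
        have hz : (D - F * M * Fᴴ) i i = 0 := by
          rw [Matrix.sub_apply, hD, Matrix.diagonal_apply_eq, sub_self]
        rw [hz, norm_zero]
        calc (0:ℝ) ^ 2 = 0 := by norm_num
          _ ≤ _ := by positivity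
      · have hDij : D i j = 0 := by rw [hD]; exact Matrix.diagonal_apply_ne _ hij
        have hCij : (F * C * Fᴴ) i j = 0 := hdiag i j hij
        rw [Matrix.sub_apply, Matrix.sub_apply, hDij, hCij]
    show Real.sqrt (frobSq (CD - M)) ≤ Real.sqrt (frobSq (C - M))
    rw [h1, h2]
    exact Real.sqrt_le_sqrt hle
end
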